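/- Under the mixture setup, for any sequence (x_1, …, x_n) ⊂ [0, 1] one has P( (∩_{i=1}^n {X̃_i = x_i}) ∩ Ã ) = P( (∩_{i=1}^n {X̃_i = 1 − x_i}) ∩ Ã^c ). -/
import Mathlib


open MeasureTheory

noncomputable section

theorem mixture_symmetry {Ω : Type} [mΩ : MeasurableSpace Ω] (P : Measure Ω)
    [IsProbabilityMeasure P] (n M : ℕ) (hM : 1 ≤ M)
    (A : Set Ω) (hA : MeasurableSet A)
    (G : Fin n → MeasurableSpace Ω) (hG : ∀ i, G i ≤ mΩ)
    (X : Fin n → Ω → ℝ)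
    (hX : ∀ i, X i =ᵐ[P] P[A.indicator (fun _ => (1 : ℝ)) | G i])
    (hXfin : ∀ i, ∃ s : Finset ℝ, s.card ≤ M ∧ ∀ᵐ ω ∂P, X i ω ∈ s)
    (U : Ω → ℝ) (hU : Measurable U)
    (hU0 : P {ω | U ω = 0} = 1 / 2) (hU1 : P {ω | U ω = 1} = 1 / 2)
    (hindep : ProbabilityTheory.Indep (MeasurableSpace.comap U inferInstance)
      ((⨆ i, G i) ⊔ MeasurableSpace.generateFrom {A}) P)
    (Xt : Fin n → Ω → ℝ)
    (hXt : Xt = fun i ω => U ω * X i ω + (1 - U ω) * (1 - X i ω))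
    (At : Set Ω) (hAt : At = (A ∩ {ω | U ω = 1}) ∪ (Aᶜ ∩ {ω | U ω = 0}))
    (Gt : Fin n → MeasurableSpace Ω)
    (hGt : Gt = fun i => G i ⊔ MeasurableSpace.comap U inferInstance) :
    ∀ x : Fin n → ℝ, (∀ i, x i ∈ Set.Icc (0 : ℝ) 1) →
      P ((⋂ i, {ω | Xt i ω = x i}) ∩ At) = P ((⋂ i, {ω | Xt i ω = 1 - x i}) ∩ Atᶜ) := by
  intro x _hx
  -- the measurable version of X
  set Y : Fin n → Ω → ℝ := fun i => P[A.indicator (fun _ => (1 : ℝ)) | G i] with hY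
  set Yt : Fin n → Ω → ℝ := fun i ω => U ω * Y i ω + (1 - U ω) * (1 - Y i ω) with hYt
  have hYmeasG : ∀ i, Measurable[G i] (Y i) := fun i => stronglyMeasurable_condExp.measurable
  have hYmeas : ∀ i, Measurable (Y i) := fun i =>
    (stronglyMeasurable_condExp.mono (hG i)).measurable
  -- the events
  set V0 : Set Ω := {ω | U ω = 0} with hV0
  set V1 : Set Ω := {ω | U ω = 1} with hV1
  have hV0m : MeasurableSet V0 := hU (measurableSet_singleton 0)
  have hV1m : MeasurableSet V1 := hU (measurableSet_singleton 1)
  set B : Set Ω := ⋂ i, {ω | Y i ω = x i} with hB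
  set C : Set Ω := ⋂ i, {ω | Y i ω = 1 - x i} with hC
  set F : Set Ω := ⋂ i, {ω | Yt i ω = x i} with hF
  set F' : Set Ω := ⋂ i, {ω | Yt i ω = 1 - x i} with hF'
  have hBm : MeasurableSet B := MeasurableSet.iInter fun i =>
    (hYmeas i) (measurableSet_singleton (x i))
  have hCm : MeasurableSet C := MeasurableSet.iInter fun i =>
    (hYmeas i) (measurableSet_singleton (1 - x i))
  have hYtmeas : ∀ i, Measurable (Yt i) := fun i =>
    (hU.mul (hYmeas i)).add ((measurable_const.sub hU).mul (measurable_const.sub (hYmeas i)))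
  have hFm : MeasurableSet F := MeasurableSet.iInter fun i =>
    (hYtmeas i) (measurableSet_singleton (x i))
  have hF'm : MeasurableSet F' := MeasurableSet.iInter fun i =>
    (hYtmeas i) (measurableSet_singleton (1 - x i))
  have hAtm : MeasurableSet At := by
    rw [hAt]; exact (hA.inter hV1m).union (hA.compl.inter hV0m)
  -- a.e. replacement of Xt by Yt
  have hae : ∀ᵐ ω ∂P, ∀ i, X i ω = Y i ω := by
    rw [MeasureTheory.ae_all_iff]; exact fun i => hX i
  have hrepl : ∀ (c : Fin n → ℝ) (S : Set Ω),
      (((⋂ i, {ω | Xt i ω = c i}) ∩ S : Set Ω)) =ᵐ[P] ((⋂ i, {ω | Yt i ω = c i}) ∩ S : Set Ω) := by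
    intro c S
    filter_upwards [hae] with ω h
    have : ∀ i, Xt i ω = Yt i ω := by intro i; simp [hXt, hYt, h i]
    have hx2 : (ω ∈ (⋂ i, {ω | Xt i ω = c i}) ∩ S) ↔ (ω ∈ (⋂ i, {ω | Yt i ω = c i}) ∩ S) := by
      simp only [Set.mem_inter_iff, Set.mem_iInter, Set.mem_setOf_eq]
      constructor <;> rintro ⟨h1, h2⟩
      · exact ⟨fun i => by rw [← this i]; exact h1 i, h2⟩
      · exact ⟨fun i => by rw [this i]; exact h1 i, h2⟩
    exact eq_iff_iff.2 hx2
  -- splitting along V0 ∪ V1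
  have hfull : P (V0 ∪ V1)ᶜ = 0 := by
    have hdisj : Disjoint V0 V1 := by
      rw [Set.disjoint_left]; intro ω h0 h1
      exact (zero_ne_one (α := ℝ)) (h0.symm.trans h1)
    have : P (V0 ∪ V1) = 1 := by
      rw [measure_union hdisj hV1m, hU0, hU1]
      rw [one_div, ENNReal.inv_two_add_inv_two]
    rw [measure_compl (hV0m.union hV1m) (measure_ne_top _ _), this, measure_univ, tsub_self]
  have hsplit : ∀ S : Set Ω, MeasurableSet S → P S = P (S ∩ V0) + P (S ∩ V1) := by
    intro S hS
    have h1 : P S = P (S ∩ (V0 ∪ V1)) := (measure_inter_conull hfull).symm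
    rw [h1, Set.inter_union_distrib_left,
      measure_union ?_ (hS.inter hV1m)]
    rw [Set.disjoint_left]
    rintro ω ⟨-, h0⟩ ⟨-, h1'⟩
    exact (zero_ne_one (α := ℝ)) (h0.symm.trans h1')
  -- independence
  have hind : ∀ S : Set Ω, MeasurableSet[(⨆ i, G i) ⊔ MeasurableSpace.generateFrom {A}] S →
      ∀ c : ℝ, P (S ∩ {ω | U ω = c}) = P S * P {ω | U ω = c} := by
    intro S hS c
    have hc : MeasurableSet[MeasurableSpace.comap U inferInstance] {ω | U ω = c} :=
      ⟨{c}, measurableSet_singleton c, rfl⟩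
    have := (hindep.indepSet_of_measurableSet hc hS).measure_inter_eq_mul
    rw [Set.inter_comm] at this
    rw [this, mul_comm]
  have hmemB : MeasurableSet[(⨆ i, G i) ⊔ MeasurableSpace.generateFrom {A}] (B ∩ A) := by
    refine MeasurableSet.inter ?_ ?_
    · exact (le_sup_left : (⨆ i, G i) ≤ _) _ (MeasurableSet.iInter fun i =>
        (le_iSup G i : G i ≤ ⨆ i, G i) _ ((hYmeasG i) (measurableSet_singleton (x i))))
    · exact (le_sup_right : MeasurableSpace.generateFrom {A} ≤ _) _
        (MeasurableSpace.measurableSet_generateFrom rfl)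
  have hmemC : MeasurableSet[(⨆ i, G i) ⊔ MeasurableSpace.generateFrom {A}] (C ∩ Aᶜ) := by
    refine MeasurableSet.inter ?_ ?_
    · exact (le_sup_left : (⨆ i, G i) ≤ _) _ (MeasurableSet.iInter fun i =>
        (le_iSup G i : G i ≤ ⨆ i, G i) _ ((hYmeasG i) (measurableSet_singleton (1 - x i))))
    · exact MeasurableSet.compl ((le_sup_right : MeasurableSpace.generateFrom {A} ≤ _) _
        (MeasurableSpace.measurableSet_generateFrom rfl))
  -- set identities
  have hYt1 : ∀ ω, U ω = 1 → ∀ i, Yt i ω = Y i ω := by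
    intro ω h i; simp [hYt, h]
  have hYt0 : ∀ ω, U ω = 0 → ∀ i, Yt i ω = 1 - Y i ω := by
    intro ω h i; simp [hYt, h]
  have e1 : (F ∩ At) ∩ V1 = (B ∩ A) ∩ V1 := by
    ext ω
    simp only [Set.mem_inter_iff, Set.mem_iInter, Set.mem_setOf_eq, hAt, Set.mem_union,
      Set.mem_compl_iff, hF, hB]
    constructor
    · rintro ⟨⟨hf, hat⟩, hu⟩
      refine ⟨⟨fun i => by rw [← hYt1 ω hu i]; exact hf i, ?_⟩, hu⟩
      rcases hat with ⟨ha, -⟩ | ⟨-, h0⟩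
      · exact ha
      · exact absurd (h0.symm.trans hu) (zero_ne_one (α := ℝ))
    · rintro ⟨⟨hb, ha⟩, hu⟩
      exact ⟨⟨fun i => by rw [hYt1 ω hu i]; exact hb i, Or.inl ⟨ha, hu⟩⟩, hu⟩
  have e2 : (F ∩ At) ∩ V0 = (C ∩ Aᶜ) ∩ V0 := by
    ext ω
    simp only [Set.mem_inter_iff, Set.mem_iInter, Set.mem_setOf_eq, hAt, Set.mem_union,
      Set.mem_compl_iff, hF, hC]
    constructor
    · rintro ⟨⟨hf, hat⟩, hu⟩
      refine ⟨⟨fun i => by have := hf i; rw [hYt0 ω hu i] at this; linarith, ?_⟩, hu⟩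
      rcases hat with ⟨-, h1⟩ | ⟨ha, -⟩
      · exact absurd (hu.symm.trans h1) (zero_ne_one (α := ℝ))
      · exact ha
    · rintro ⟨⟨hc, ha⟩, hu⟩
      refine ⟨⟨fun i => by rw [hYt0 ω hu i]; have := hc i; linarith, Or.inr ⟨ha, hu⟩⟩, hu⟩
  have e3 : (F' ∩ Atᶜ) ∩ V1 = (C ∩ Aᶜ) ∩ V1 := by
    ext ω
    simp only [Set.mem_inter_iff, Set.mem_compl_iff, Set.mem_iInter, Set.mem_setOf_eq, hF', hC]
    constructor
    · rintro ⟨⟨hf, hat⟩, hu⟩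
      refine ⟨⟨fun i => by rw [← hYt1 ω hu i]; exact hf i, fun ha => hat ?_⟩, hu⟩
      rw [hAt]; exact Set.mem_union_left _ ⟨ha, hu⟩
    · rintro ⟨⟨hc, ha⟩, hu⟩
      refine ⟨⟨fun i => by rw [hYt1 ω hu i]; exact hc i, fun hat => ?_⟩, hu⟩
      rw [hAt] at hat
      rcases hat with ⟨ha', -⟩ | ⟨-, h0⟩
      · exact ha ha'
      · exact (zero_ne_one (α := ℝ)) (h0.symm.trans hu)
  have e4 : (F' ∩ Atᶜ) ∩ V0 = (B ∩ A) ∩ V0 := by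
    ext ω
    simp only [Set.mem_inter_iff, Set.mem_compl_iff, Set.mem_iInter, Set.mem_setOf_eq, hF', hB]
    constructor
    · rintro ⟨⟨hf, hat⟩, hu⟩
      refine ⟨⟨fun i => by have := hf i; rw [hYt0 ω hu i] at this; linarith, ?_⟩, hu⟩
      by_contra ha
      exact hat (by rw [hAt]; exact Set.mem_union_right _ ⟨ha, hu⟩)
    · rintro ⟨⟨hb, ha⟩, hu⟩
      refine ⟨⟨fun i => by rw [hYt0 ω hu i]; have := hb i; linarith, fun hat => ?_⟩, hu⟩
      rw [hAt] at hat
      rcases hat with ⟨-, h1⟩ | ⟨ha', -⟩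
      · exact (zero_ne_one (α := ℝ)) (hu.symm.trans h1)
      · exact ha' ha
  -- put it together
  have L1 : P ((⋂ i, {ω | Xt i ω = x i}) ∩ At) = P (F ∩ At) := measure_congr (hrepl x At)
  have L2 : P ((⋂ i, {ω | Xt i ω = 1 - x i}) ∩ Atᶜ) = P (F' ∩ Atᶜ) :=
    measure_congr (hrepl (fun i => 1 - x i) Atᶜ)
  rw [L1, L2, hsplit (F ∩ At) (hFm.inter hAtm), hsplit (F' ∩ Atᶜ) (hF'm.inter hAtm.compl),
    e1, e2, e3, e4]
  rw [hind (B ∩ A) hmemB 1, hind (B ∩ A) hmemB 0, hind (C ∩ Aᶜ) hmemC 1, hind (C ∩ Aᶜ) hmemC 0]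
  rw [← hV0, ← hV1, hU0, hU1]
  ring
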